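/- arXiv:1305.4952 — 2 statements merged into one kernel-verified Lean document; each statement's English description precedes it below -/
import Mathlib

section
/- A real symmetric n×n matrix is positive semidefinite if and only if all of its principal minors (determinants of submatrices formed by choosing the same subset of rows and columns, over all nonempty subsets of {1,...,n}) are nonnegative. -/
open Matrix Finset

variable {n : ℕ}

private lemma det_basis_piecewise (S : Finset (Fin n)) (A : Matrix (Fin n) (Fin n) ℝ) :
    (Matrix.of fun i => if i ∈ S then A i else Pi.single i (1 : ℝ)).det
      = (A.submatrix (Subtype.val : {i // i ∈ S} → Fin n) Subtype.val).det := by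
  classical
  set B : Matrix (Fin n) (Fin n) ℝ := Matrix.of fun i => if i ∈ S then A i else Pi.single i 1
  let e : {i // i ∈ S} ⊕ {i // ¬ i ∈ S} ≃ Fin n := Equiv.sumCompl (· ∈ S)
  have h1 : B.submatrix e e =
      Matrix.fromBlocks (A.submatrix (Subtype.val : {i // i ∈ S} → Fin n) Subtype.val)
        (Matrix.of fun (i : {i // i ∈ S}) (j : {i // ¬ i ∈ S}) => A i.1 j.1) 0 1 := by
    ext i j
    rcases i with i | i <;> rcases j with j | j
    · simp [B, e, i.2, Equiv.sumCompl_apply_inl, Equiv.sumCompl_apply_inr]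
    · simp [B, e, i.2]
    · have : (j : Fin n) ≠ (i : Fin n) := fun h => i.2 (h ▸ j.2)
      simp [B, e, i.2, Pi.single_apply, this]
    · simp only [B, e, Matrix.submatrix_apply, Equiv.sumCompl_apply_inr, Matrix.of_apply,
        if_neg i.2, Matrix.fromBlocks_apply₂₂, Matrix.one_apply, Pi.single_apply]
      by_cases h : i = j
      · simp [h]
      · have : (j : Fin n) ≠ (i : Fin n) := fun hh => h (Subtype.ext hh.symm)
        simp [h, this]
  rw [← Matrix.det_submatrix_equiv_self e B, h1, Matrix.det_fromBlocks_zero₂₁, Matrix.det_one,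
    mul_one]

private lemma det_add_diagonal_expand (A : Matrix (Fin n) (Fin n) ℝ) (d : Fin n → ℝ) :
    (A + Matrix.diagonal d).det
      = ∑ S : Finset (Fin n), (∏ i ∈ Sᶜ, d i) *
          (A.submatrix (Subtype.val : {i // i ∈ S} → Fin n) Subtype.val).det := by
  classical
  have hrows : (fun i => (A + Matrix.diagonal d) i)
      = ((fun i => A i) + fun i => d i • (Pi.single i 1 : Fin n → ℝ) : Fin n → Fin n → ℝ) := by
    funext i j
    by_cases h : i = j <;> simp [Matrix.diagonal_apply, Pi.single_apply, h, eq_comm]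
  have h0 : (A + Matrix.diagonal d).det
      = (Matrix.detRowAlternating (R := ℝ) (n := Fin n)).toMultilinearMap
          ((fun i => A i) + fun i => d i • (Pi.single i 1 : Fin n → ℝ)) := by
    rw [← hrows]; rfl
  rw [h0, MultilinearMap.map_add_univ]
  refine Finset.sum_congr rfl fun S _ => ?_
  have harg : S.piecewise (fun i => A i) (fun i => d i • (Pi.single i 1 : Fin n → ℝ))
      = fun i => (Matrix.of fun i j => (if i ∈ S then (1 : ℝ) else d i) *
          (Matrix.of fun i' => if i' ∈ S then A i' else (Pi.single i' 1 : Fin n → ℝ)) i j) i := by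
    funext i j
    by_cases h : i ∈ S <;> simp [Finset.piecewise, h]
  rw [harg]
  show (Matrix.of fun i j => (if i ∈ S then (1 : ℝ) else d i) *
          (Matrix.of fun i' => if i' ∈ S then A i' else (Pi.single i' 1 : Fin n → ℝ)) i j).det
      = _
  have h2 : (Matrix.of fun i j => (if i ∈ S then (1 : ℝ) else d i) *
        (Matrix.of fun i' => if i' ∈ S then A i' else (Pi.single i' 1 : Fin n → ℝ)) i j)
      = Matrix.diagonal (fun i => if i ∈ S then (1 : ℝ) else d i) *
        (Matrix.of fun i' => if i' ∈ S then A i' else (Pi.single i' 1 : Fin n → ℝ)) := by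
    ext i j
    rw [Matrix.diagonal_mul]
    rfl
  rw [h2, Matrix.det_mul, Matrix.det_diagonal, det_basis_piecewise]
  have hp1 : ∏ i ∈ S, (if i ∈ S then (1 : ℝ) else d i) = 1 :=
    Finset.prod_eq_one fun i hi => if_pos hi
  have hp2 : ∏ i ∈ Sᶜ, (if i ∈ S then (1 : ℝ) else d i) = ∏ i ∈ Sᶜ, d i :=
    Finset.prod_congr rfl fun i hi => if_neg (Finset.mem_compl.mp hi)
  rw [← Finset.prod_mul_prod_compl S, hp1, hp2, one_mul]

/-- A real symmetric `n × n` matrix is positive semidefinite iff all of its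
principal minors (over all nonempty index subsets) are nonnegative. -/
theorem stmt_2 {n : ℕ} (A : Matrix (Fin n) (Fin n) ℝ) (hA : A.IsSymm) :
    A.PosSemidef ↔
      ∀ S : Finset (Fin n), S.Nonempty →
        0 ≤ (A.submatrix (Subtype.val : {i // i ∈ S} → Fin n)
              (Subtype.val : {i // i ∈ S} → Fin n)).det := by
  classical
  constructor
  · intro hpsd S hS
    have h := hpsd.submatrix (Subtype.val : {i // i ∈ S} → Fin n)
    rw [h.1.det_eq_prod_eigenvalues]
    exact Finset.prod_nonneg fun i _ => h.eigenvalues_nonneg i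
  · intro hm
    have hH : A.IsHermitian := by
      rw [Matrix.IsHermitian, Matrix.conjTranspose]
      exact Matrix.isHermitian_iff_isSymm.mpr hA
    -- key : det (A + u • I) > 0 for u > 0
    have key : ∀ u : ℝ, 0 < u → 0 < (A + Matrix.diagonal (fun _ => u)).det := by
      intro u hu
      rw [det_add_diagonal_expand]
      have hempty : IsEmpty {i // i ∈ (∅ : Finset (Fin n))} :=
        Finset.isEmpty_coe_sort.mpr rfl
      refine Finset.sum_pos' (fun S _ => ?_) ⟨∅, Finset.mem_univ _, ?_⟩
      · rcases S.eq_empty_or_nonempty with rfl | h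
        · rw [Matrix.det_isEmpty, mul_one]
          exact (Finset.prod_pos fun _ _ => hu).le
        · exact mul_nonneg (Finset.prod_nonneg fun _ _ => hu.le) (hm S h)
      · rw [Matrix.det_isEmpty, mul_one]
        exact Finset.prod_pos fun _ _ => hu
    refine hH.posSemidef_iff_eigenvalues_nonneg.mpr fun i => ?_
    by_contra h
    push_neg at h
    set u : ℝ := -hH.eigenvalues i with hu
    have hupos : 0 < u := by simp [hu]; linarith [show (0 : Fin n → ℝ) i = 0 from rfl]
    have hv := hH.mulVec_eigenvectorBasis i
    have hker : (A + Matrix.diagonal (fun _ => u)) *ᵥ ⇑(hH.eigenvectorBasis i) = 0 := by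
      rw [Matrix.add_mulVec, hv, ← Matrix.smul_one_eq_diagonal, Matrix.smul_mulVec,
        Matrix.one_mulVec, ← add_smul]
      simp [hu]
    have hne : ⇑(hH.eigenvectorBasis i) ≠ 0 := by
      have := hH.eigenvectorBasis.orthonormal.ne_zero i
      intro hc
      exact this (by ext j; exact congrFun hc j)
    have : (A + Matrix.diagonal (fun _ => u)).det = 0 :=
      Matrix.exists_mulVec_eq_zero_iff.mp ⟨_, hne, hker⟩
    exact absurd this (key u hupos).ne'
end

section
/- (Sauer's Lemma) If a family G of binary-valued functions on a set Q has VC-dimension at most d, then for every N ≥ d ≥ 1 its shatter coefficient satisfies S_G(N) ≤ Σ_{i=0}^{d} C(N,i) ≤ (eN/d)^d. -/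
/-- The set of labelings realized by the family `{g θ : θ ∈ Θ}` on the multisample `q`. -/
def labelings {Θ Q : Type*} (g : Θ → Q → Bool) (N : ℕ) (q : Fin N → Q) :
    Set (Fin N → Bool) :=
  {v | ∃ θ : Θ, v = fun i => g θ (q i)}

/-- The shatter coefficient (growth function) of the family `{g θ : θ ∈ Θ}`. -/
noncomputable def shatterCoeff {Θ Q : Type*} (g : Θ → Q → Bool) (N : ℕ) : ℕ :=
  ⨆ q : Fin N → Q, (labelings g N q).ncard

lemma ncard_labelings_le {Θ Q : Type*} (g : Θ → Q → Bool) (d N : ℕ)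
    (hVC : ∀ k : ℕ, d < k → ∀ q : Fin k → Q, (labelings g k q).ncard < 2 ^ k)
    (q : Fin N → Q) :
    (labelings g N q).ncard ≤ ∑ i ∈ Finset.range (d + 1), N.choose i := by
  classical
  have hfin : (labelings g N q).Finite := Set.toFinite _
  set f : (Fin N → Bool) → Finset (Fin N) :=
    fun v => Finset.univ.filter (fun i => v i = true) with hf
  have hfinj : Function.Injective f := by
    intro v w h
    funext i
    have : i ∈ f v ↔ i ∈ f w := by rw [h]
    simpa [hf, Finset.mem_filter] using (Bool.eq_iff_iff).mpr (by simpa [hf] using this)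
  set 𝒜 : Finset (Finset (Fin N)) := hfin.toFinset.image f with h𝒜
  have hcard : (labelings g N q).ncard = 𝒜.card := by
    rw [h𝒜, Finset.card_image_of_injective _ hfinj, Set.ncard_eq_toFinset_card _ hfin]
  -- members of 𝒜 correspond to labelings
  have hmem : ∀ u ∈ 𝒜, ∃ θ : Θ, ∀ i : Fin N, (i ∈ u ↔ g θ (q i) = true) := by
    intro u hu
    rw [h𝒜, Finset.mem_image] at hu
    obtain ⟨v, hv, rfl⟩ := hu
    rw [Set.Finite.mem_toFinset] at hv
    obtain ⟨θ, rfl⟩ := hv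
    exact ⟨θ, fun i => by simp [hf]⟩
  have hvc : 𝒜.vcDim ≤ d := by
    refine Finset.sup_le fun s hs => ?_
    rw [Finset.mem_shatterer] at hs
    by_contra hk
    push_neg at hk
    set k := s.card with hks
    have e := s.orderIsoOfFin hks.symm
    set q' : Fin k → Q := fun i => q (e i) with hq'
    have huniv : labelings g k q' = Set.univ := by
      refine Set.eq_univ_of_forall fun w => ?_
      set t : Finset (Fin N) :=
        (Finset.univ.filter fun i => w i = true).image (fun i => (e i : Fin N)) with ht
      have hts : t ⊆ s := by
        intro j hj
        rw [ht, Finset.mem_image] at hj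
        obtain ⟨i, _, rfl⟩ := hj
        exact (e i).2
      obtain ⟨u, hu, hsu⟩ := hs hts
      obtain ⟨θ, hθ⟩ := hmem u hu
      refine ⟨θ, funext fun i => ?_⟩
      rw [Bool.eq_iff_iff]
      have h1 : (e i : Fin N) ∈ t ↔ w i = true := by
        simp only [ht, Finset.mem_image, Finset.mem_filter, Finset.mem_univ, true_and]
        constructor
        · rintro ⟨i', hw, hii⟩
          have : e i' = e i := Subtype.ext hii
          rwa [e.injective this] at hw
        · exact fun hw => ⟨i, hw, rfl⟩
      have h2 : (e i : Fin N) ∈ t ↔ (e i : Fin N) ∈ u := by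
        rw [← hsu, Finset.mem_inter, and_iff_right (e i).2]
      rw [← h1, h2]
      exact hθ _
    have := hVC k hk q'
    rw [huniv, Set.ncard_univ, Nat.card_eq_fintype_card] at this
    simp at this
  calc (labelings g N q).ncard = 𝒜.card := hcard
    _ ≤ 𝒜.shatterer.card := Finset.card_le_card_shatterer 𝒜
    _ ≤ ∑ k ∈ Finset.Iic 𝒜.vcDim, (Fintype.card (Fin N)).choose k :=
        Finset.card_shatterer_le_sum_vcDim
    _ ≤ ∑ i ∈ Finset.range (d + 1), N.choose i := by
        simp only [Fintype.card_fin]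
        rw [show Finset.range (d + 1) = Finset.Iic d from by
          ext i; simp [Nat.lt_succ_iff]]
        exact Finset.sum_le_sum_of_subset (Finset.Iic_subset_Iic.mpr hvc)

lemma analytic_bound (d N : ℕ) (hd : 1 ≤ d) (hN : d ≤ N) :
    ((∑ i ∈ Finset.range (d + 1), N.choose i : ℕ) : ℝ) ≤
      (Real.exp 1 * N / d) ^ d := by
  have hd0 : (0:ℝ) < d := by exact_mod_cast hd
  have hN0 : (0:ℝ) < N := lt_of_lt_of_le hd0 (by exact_mod_cast hN)
  set x : ℝ := (d : ℝ) / N with hx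
  have hx0 : 0 < x := by positivity
  have hx1 : x ≤ 1 := by
    rw [hx, div_le_one hN0]; exact_mod_cast hN
  set S : ℝ := ((∑ i ∈ Finset.range (d + 1), N.choose i : ℕ) : ℝ) with hS
  have key : x ^ d * S ≤ Real.exp d := by
    have h1 : x ^ d * S ≤ ∑ i ∈ Finset.range (d + 1), (N.choose i : ℝ) * x ^ i := by
      rw [hS]
      push_cast
      rw [Finset.mul_sum]
      refine Finset.sum_le_sum fun i hi => ?_
      rw [mul_comm]
      exact mul_le_mul_of_nonneg_left
        (pow_le_pow_of_le_one hx0.le hx1 (Nat.lt_succ_iff.mp (Finset.mem_range.mp hi)))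
        (Nat.cast_nonneg _)
    have h2 : ∑ i ∈ Finset.range (d + 1), (N.choose i : ℝ) * x ^ i
        ≤ ∑ i ∈ Finset.range (N + 1), (N.choose i : ℝ) * x ^ i := by
      refine Finset.sum_le_sum_of_subset_of_nonneg ?_ fun i _ _ => by positivity
      exact Finset.range_subset_range.mpr (by omega)
    have h3 : ∑ i ∈ Finset.range (N + 1), (N.choose i : ℝ) * x ^ i = (1 + x) ^ N := by
      rw [add_comm 1 x, add_pow]
      exact Finset.sum_congr rfl fun i hi => by ring
    have hNx : (N : ℝ) * x = d := by rw [hx]; field_simp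
    have h4 : (1 + x) ^ N ≤ Real.exp d := by
      calc (1 + x) ^ N ≤ (Real.exp x) ^ N :=
            pow_le_pow_left₀ (by positivity)
              (by rw [add_comm]; exact Real.add_one_le_exp x) N
        _ = Real.exp d := by rw [← Real.exp_nat_mul, hNx]
    linarith
  have hSle : S ≤ Real.exp d / x ^ d := by
    rw [le_div_iff₀ (pow_pos hx0 d), mul_comm]; exact key
  refine hSle.trans (le_of_eq ?_)
  have hexp : Real.exp (d : ℝ) = Real.exp 1 ^ d := by
    rw [← Real.exp_nat_mul, mul_one]
  rw [hexp, hx]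
  field_simp
  rw [← mul_pow]; congr 1; field_simp

/-- Sauer's lemma: if the VC-dimension of the family is at most `d` (no `k > d`
points are shattered), then for `N ≥ d ≥ 1`,
`S_G(N) ≤ ∑_{i=0}^{d} C(N,i) ≤ (eN/d)^d`. -/
theorem stmt_12 {Θ Q : Type*} (g : Θ → Q → Bool) (d N : ℕ) (hd : 1 ≤ d) (hN : d ≤ N)
    (hVC : ∀ k : ℕ, d < k → ∀ q : Fin k → Q, (labelings g k q).ncard < 2 ^ k) :
    shatterCoeff g N ≤ ∑ i ∈ Finset.range (d + 1), N.choose i ∧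
    ((∑ i ∈ Finset.range (d + 1), N.choose i : ℕ) : ℝ) ≤
      (Real.exp 1 * N / d) ^ d := by
  constructor
  · rw [shatterCoeff]
    by_cases h : Nonempty (Fin N → Q)
    · exact ciSup_le fun q => ncard_labelings_le g d N hVC q
    · haveI := not_nonempty_iff.mp h
      rw [ciSup_of_empty]
      exact Nat.zero_le _
  · exact analytic_bound d N hd hN
end
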